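/- Let $N \ge 1$, $\mathcal{I} = \mathbb{Z}/N\mathbb{Z}$, and $(z_i^k), (z_i^{k-1}), (\mu_i^k)$ reals with $\mu_i^k \ge 0$, satisfying the discrete Kolmogorov scheme $\frac{z_i^k - z_i^{k-1}}{\Delta t} = (\Delta_{\mathcal{T}}(\mu^k z^k))_i$ for all $i$. Then the following one-step energy inequality holds: $\frac12\sum_i \Delta x\,|z_i^k|^2 + \Delta t \sum_i \frac{\mu_i^k + \mu_{i+1}^k}{2}\cdot\frac{(z_{i+1}^k - z_i^k)^2}{\Delta x} \le \frac12\sum_i \Delta x\,|z_i^{k-1}|^2 + \frac{\Delta t}{2}\max_i [(\Delta_{\mathcal{T}}\mu^k)_i]_+ \sum_i \Delta x\,|z_i^k|^2$. -/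

import Mathlib

private lemma zmod_sum_shift {N : ℕ} [NeZero N] (f : ZMod N → ℝ) :
    ∑ i : ZMod N, f (i + 1) = ∑ i : ZMod N, f i :=
  Fintype.sum_equiv (Equiv.addRight 1) _ _ (fun _ => rfl)

/-- One-step `L²` energy estimate for the implicit discretization of the Kolmogorov
equation `∂ₜ z = Δ(μ z)` on the discrete torus. -/
theorem kolmogorov_energy_estimate (N : ℕ) [NeZero N] (Δt Δx : ℝ) (hΔt : 0 < Δt) (hΔx : 0 < Δx)
    (μ z zprev : ZMod N → ℝ) (hμ : ∀ i, 0 ≤ μ i)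
    (hscheme : ∀ i : ZMod N,
      (z i - zprev i) / Δt
        = (μ (i + 1) * z (i + 1) - 2 * (μ i * z i) + μ (i - 1) * z (i - 1)) / Δx ^ 2) :
    (1 / 2) * ∑ i : ZMod N, Δx * |z i| ^ 2
        + Δt * ∑ i : ZMod N, (μ i + μ (i + 1)) / 2 * ((z (i + 1) - z i) ^ 2 / Δx)
      ≤ (1 / 2) * ∑ i : ZMod N, Δx * |zprev i| ^ 2
        + Δt / 2 * Finset.univ.sup' Finset.univ_nonempty
            (fun j : ZMod N => max ((μ (j + 1) - 2 * μ j + μ (j - 1)) / Δx ^ 2) 0)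
          * ∑ i : ZMod N, Δx * |z i| ^ 2 := by
  have hΔx2 : (0:ℝ) < Δx ^ 2 := by positivity
  have hΔxne : Δx ≠ 0 := ne_of_gt hΔx
  set w : ZMod N → ℝ := fun i => μ i * z i with hw
  set M : ℝ := Finset.univ.sup' Finset.univ_nonempty
      (fun j : ZMod N => max ((μ (j + 1) - 2 * μ j + μ (j - 1)) / Δx ^ 2) 0) with hM
  set P : ℝ := ∑ i : ZMod N, z i ^ 2 with hP
  set Q : ℝ := ∑ i : ZMod N, zprev i ^ 2 with hQ
  set D : ℝ := ∑ i : ZMod N, (μ i + μ (i + 1)) / 2 * (z (i + 1) - z i) ^ 2 with hD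
  set E : ℝ := ∑ i : ZMod N, z i ^ 2 * (μ (i + 1) - 2 * μ i + μ (i - 1)) with hE
  -- shift identities
  have s1 : ∑ i : ZMod N, w (i - 1) * z i = ∑ i : ZMod N, w i * z (i + 1) := by
    have := zmod_sum_shift (fun i : ZMod N => w (i - 1) * z i)
    simp only [add_sub_cancel_right] at this
    exact this.symm
  have s2 : ∑ i : ZMod N, w (i + 1) * z (i + 1) = ∑ i : ZMod N, w i * z i :=
    zmod_sum_shift (fun i : ZMod N => w i * z i)
  -- identity 1 : summation by parts
  have h1 : ∑ i : ZMod N, (w (i + 1) - 2 * w i + w (i - 1)) * z i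
      = -∑ i : ZMod N, (w (i + 1) - w i) * (z (i + 1) - z i) := by
    have e : ∀ i : ZMod N, (w (i + 1) - 2 * w i + w (i - 1)) * z i
        = -((w (i + 1) - w i) * (z (i + 1) - z i))
          + (w (i - 1) * z i - w i * z (i + 1)) + (w (i + 1) * z (i + 1) - w i * z i) := by
      intro i; ring
    rw [Finset.sum_congr rfl (fun i _ => e i)]
    rw [Finset.sum_add_distrib, Finset.sum_add_distrib, Finset.sum_sub_distrib,
      Finset.sum_sub_distrib, Finset.sum_neg_distrib, s1, s2]
    ring
  -- identity 2+3 : decompose T = D - E/2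
  have h3 : ∑ i : ZMod N, ((μ (i + 1) - μ i) * z (i + 1) ^ 2 - (μ i - μ (i - 1)) * z i ^ 2) = 0 := by
    rw [Finset.sum_sub_distrib]
    have := zmod_sum_shift (fun i : ZMod N => (μ i - μ (i - 1)) * z i ^ 2)
    simp only [add_sub_cancel_right] at this
    rw [this]; ring
  have hT : ∑ i : ZMod N, (w (i + 1) - w i) * (z (i + 1) - z i) = D - (1/2) * E := by
    have e : ∀ i : ZMod N, (w (i + 1) - w i) * (z (i + 1) - z i)
        = (μ i + μ (i + 1)) / 2 * (z (i + 1) - z i) ^ 2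
          + (1/2) * ((μ (i + 1) - μ i) * z (i + 1) ^ 2 - (μ i - μ (i - 1)) * z i ^ 2)
          - (1/2) * (z i ^ 2 * (μ (i + 1) - 2 * μ i + μ (i - 1))) := by
      intro i; simp only [hw]; ring
    rw [Finset.sum_congr rfl (fun i _ => e i), Finset.sum_sub_distrib, Finset.sum_add_distrib,
      ← Finset.mul_sum, ← Finset.mul_sum, h3, ← hD, ← hE]
    ring
  -- from the scheme
  have hpt : ∀ i : ZMod N, (z i - zprev i) * z i * Δx ^ 2
      = Δt * ((w (i + 1) - 2 * w i + w (i - 1)) * z i) := by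
    intro i
    have := (div_eq_div_iff (ne_of_gt hΔt) (ne_of_gt hΔx2)).mp (hscheme i)
    simp only [hw]
    linear_combination z i * this
  have hsum : Δx ^ 2 * ∑ i : ZMod N, (z i - zprev i) * z i = Δt * ((1/2) * E - D) := by
    have : ∑ i : ZMod N, (z i - zprev i) * z i * Δx ^ 2
        = ∑ i : ZMod N, Δt * ((w (i + 1) - 2 * w i + w (i - 1)) * z i) :=
      Finset.sum_congr rfl (fun i _ => hpt i)
    rw [← Finset.sum_mul, ← Finset.mul_sum] at this
    rw [mul_comm, this, h1, hT]; ring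
  -- energy inequality (a-b)a ≥ (a²-b²)/2
  have hen : (P - Q) / 2 ≤ ∑ i : ZMod N, (z i - zprev i) * z i := by
    have : ∀ i ∈ (Finset.univ : Finset (ZMod N)),
        (z i ^ 2 - zprev i ^ 2) / 2 ≤ (z i - zprev i) * z i := by
      intro i _; nlinarith [sq_nonneg (z i - zprev i)]
    have h := Finset.sum_le_sum this
    rw [hP, hQ]
    calc (∑ i : ZMod N, z i ^ 2 - ∑ i : ZMod N, zprev i ^ 2) / 2
        = ∑ i : ZMod N, (z i ^ 2 - zprev i ^ 2) / 2 := by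
          rw [← Finset.sum_sub_distrib, Finset.sum_div]
      _ ≤ _ := h
  -- bound E by M
  have hMi : ∀ i : ZMod N, (μ (i + 1) - 2 * μ i + μ (i - 1)) / Δx ^ 2 ≤ M := by
    intro i
    exact le_trans (le_max_left _ _)
      (Finset.le_sup' (fun j : ZMod N => max ((μ (j + 1) - 2 * μ j + μ (j - 1)) / Δx ^ 2) 0)
        (Finset.mem_univ i))
  have hM0 : 0 ≤ M :=
    le_trans (le_max_right _ 0)
      (Finset.le_sup' (fun j : ZMod N => max ((μ (j + 1) - 2 * μ j + μ (j - 1)) / Δx ^ 2) 0)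
        (Finset.mem_univ (0 : ZMod N)))
  have hEb : E ≤ Δx ^ 2 * M * P := by
    rw [hE, hP, Finset.mul_sum]
    apply Finset.sum_le_sum
    intro i _
    have h1 : μ (i + 1) - 2 * μ i + μ (i - 1) ≤ Δx ^ 2 * M := by
      have := hMi i
      rw [div_le_iff₀ hΔx2] at this
      linarith
    calc z i ^ 2 * (μ (i + 1) - 2 * μ i + μ (i - 1))
        ≤ z i ^ 2 * (Δx ^ 2 * M) := mul_le_mul_of_nonneg_left h1 (sq_nonneg _)
      _ = Δx ^ 2 * M * z i ^ 2 := by ring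
  -- key combined inequality
  have hkey : Δx ^ 2 * P + 2 * Δt * D ≤ Δx ^ 2 * Q + Δt * Δx ^ 2 * M * P := by
    have h4 : Δx ^ 2 * ((P - Q) / 2) ≤ Δt * ((1/2) * E - D) := by
      rw [← hsum]
      exact mul_le_mul_of_nonneg_left hen (le_of_lt hΔx2)
    have h5 : Δt * E ≤ Δt * (Δx ^ 2 * M * P) := mul_le_mul_of_nonneg_left hEb (le_of_lt hΔt)
    nlinarith [h4, h5]
  -- rewrite the goal sums
  have g1 : ∑ i : ZMod N, Δx * |z i| ^ 2 = Δx * P := by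
    rw [hP, Finset.mul_sum]; exact Finset.sum_congr rfl (fun i _ => by rw [sq_abs])
  have g2 : ∑ i : ZMod N, Δx * |zprev i| ^ 2 = Δx * Q := by
    rw [hQ, Finset.mul_sum]; exact Finset.sum_congr rfl (fun i _ => by rw [sq_abs])
  have g3 : ∑ i : ZMod N, (μ i + μ (i + 1)) / 2 * ((z (i + 1) - z i) ^ 2 / Δx) = D / Δx := by
    rw [hD, Finset.sum_div]
    exact Finset.sum_congr rfl (fun i _ => by rw [mul_div_assoc])
  rw [g1, g2, g3]
  rw [show (1:ℝ)/2 * (Δx * P) + Δt * (D / Δx) = (Δx ^ 2 * P + 2 * Δt * D) / (2 * Δx) by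
      field_simp,
    show (1:ℝ)/2 * (Δx * Q) + Δt / 2 * M * (Δx * P)
        = (Δx ^ 2 * Q + Δt * Δx ^ 2 * M * P) / (2 * Δx) by field_simp]
  gcongr
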